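/- Let Y = {y_n} ⊂ (0,1) with (y_n) strictly decreasing to 0 with strictly decreasing gaps and Minkowski dimension d ∈ [0,1). Let Γ_n be the graph over [y_n, 1] of x(y) = y_n/y (trajectories of the linear saddle with α = 1 through (1, y_n)). Then the Minkowski dimension of ⋃_n Γ_n exists and equals 1 + d. -/

import Mathlib

open Filter MeasureTheory Set

namespace ResSaddleAux

variable {y : ℕ → ℝ}

lemma gaps_tendsto (hlim : Tendsto y atTop (nhds 0)) :
    Tendsto (fun n => y n - y (n + 1)) atTop (nhds 0) := by
  have h2 : Tendsto (fun n => y (n + 1)) atTop (nhds 0) :=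
    hlim.comp (tendsto_add_atTop_nat 1)
  simpa using hlim.sub h2

lemma exists_gap_lt (hlim : Tendsto y atTop (nhds 0)) {ε : ℝ} (hε : 0 < ε) :
    ∃ n, y n - y (n + 1) < 2 * ε := by
  have := (gaps_tendsto hlim).eventually_lt_const (by linarith : (0:ℝ) < 2 * ε)
  exact this.exists

lemma chain_le (hanti : StrictAnti y) {ε : ℝ} {N : ℕ}
    (hNmin : ∀ n < N, 2 * ε ≤ y n - y (n + 1)) :
    ∀ n m, n < m → m ≤ N → y m + 2 * ε ≤ y n := by
  intro n m hnm hmN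
  obtain ⟨k, rfl⟩ : ∃ k, m = k + 1 :=
    ⟨m - 1, (Nat.succ_pred_eq_of_pos (Nat.pos_of_ne_zero (by omega))).symm⟩
  have h1 : y k ≤ y n := hanti.antitone (Nat.lt_succ_iff.mp hnm)
  have h2 : 2 * ε ≤ y k - y (k + 1) := hNmin k (by omega)
  linarith

lemma thick_eq (hpos : ∀ n, 0 < y n) (hanti : StrictAnti y)
    (hlim : Tendsto y atTop (nhds 0))
    (hgaps : StrictAnti fun n => y n - y (n + 1))
    {ε : ℝ} (hε : 0 < ε) {N : ℕ}
    (hN : y N - y (N + 1) < 2 * ε) (hNmin : ∀ n < N, 2 * ε ≤ y n - y (n + 1)) :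
    Metric.thickening ε (Set.range y)
      = Ioo (-ε) (y N + ε) ∪ ⋃ n ∈ Finset.range N, Ioo (y n - ε) (y n + ε) := by
  ext z
  rw [Metric.mem_thickening_iff]
  constructor
  · rintro ⟨w, ⟨m, rfl⟩, hd⟩
    rw [Real.dist_eq, abs_lt] at hd
    rcases lt_or_ge m N with hm | hm
    · exact Or.inr (mem_biUnion (Finset.mem_range.mpr hm)
        ⟨by linarith [hd.2], by linarith [hd.1]⟩)
    · have h1 : y m ≤ y N := hanti.antitone hm
      exact Or.inl ⟨by linarith [hpos m, hd.2], by linarith [hd.1]⟩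
  · rintro (hz | hz)
    · rcases le_or_gt (y N) z with hzN | hzN
      · refine ⟨y N, mem_range_self N, ?_⟩
        rw [Real.dist_eq, abs_lt]
        exact ⟨by linarith [hz.2], by linarith [hz.2]⟩
      rcases le_or_gt z 0 with hz0 | hz0
      · have : ∀ᶠ m in atTop, y m < z + ε :=
          hlim.eventually_lt_const (by linarith [hz.1] : (0:ℝ) < z + ε)
        obtain ⟨m, hm⟩ := this.exists
        refine ⟨y m, mem_range_self m, ?_⟩
        rw [Real.dist_eq, abs_lt]
        exact ⟨by linarith, by linarith [hpos m]⟩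
      · have hex : ∃ m, y m ≤ z := by
          have := hlim.eventually_lt_const hz0
          exact ⟨this.exists.choose, this.exists.choose_spec.le⟩
        set m := Nat.find hex with hmdef
        have hym : y m ≤ z := Nat.find_spec hex
        have hNm : N < m := by
          by_contra h
          push_neg at h
          exact absurd (le_trans (hanti.antitone h) hym) (not_le.mpr hzN)
        obtain ⟨k, hk⟩ : ∃ k, m = k + 1 :=
          ⟨m - 1, (Nat.succ_pred_eq_of_pos (Nat.pos_of_ne_zero (by omega))).symm⟩
        have hyk : z < y k := by
          have := Nat.find_min hex (m := k) (by omega)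
          linarith [not_le.mp this]
        have hgk : y k - y (k + 1) ≤ y N - y (N + 1) :=
          hgaps.antitone (by omega : N ≤ k)
        have hm2 : y m = y (k + 1) := by rw [hk]
        rcases lt_or_ge (z - y m) ε with h | h
        · refine ⟨y m, mem_range_self m, ?_⟩
          rw [Real.dist_eq, abs_lt]
          exact ⟨by linarith, by linarith⟩
        · refine ⟨y k, mem_range_self k, ?_⟩
          rw [Real.dist_eq, abs_lt]
          have : y k - y m < 2 * ε := by rw [hm2]; linarith
          constructor <;> linarith
    · simp only [Finset.mem_range, mem_iUnion, mem_Ioo] at hz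
      obtain ⟨n, _, h1, h2⟩ := hz
      exact ⟨y n, mem_range_self n, by rw [Real.dist_eq, abs_lt]; constructor <;> linarith⟩


lemma vol_formula (hpos : ∀ n, 0 < y n)
    {ε : ℝ} (hε : 0 < ε) {N : ℕ}
    (key : ∀ n m, n < m → m ≤ N → y m + 2 * ε ≤ y n) :
    volume (Ioo (-ε) (y N + ε) ∪ ⋃ n ∈ Finset.range N, Ioo (y n - ε) (y n + ε))
      = ENNReal.ofReal (y N + 2 * ε * (N + 1)) := by
  have hmeas : MeasurableSet (⋃ n ∈ Finset.range N, Ioo (y n - ε) (y n + ε)) :=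
    (Finset.range N).measurableSet_biUnion (fun n _ => measurableSet_Ioo)
  have hdisj : Disjoint (Ioo (-ε) (y N + ε))
      (⋃ n ∈ Finset.range N, Ioo (y n - ε) (y n + ε)) := by
    rw [Set.disjoint_left]
    rintro z hz h2
    simp only [Finset.mem_range, mem_iUnion, mem_Ioo] at h2
    obtain ⟨n, hn, h3, _⟩ := h2
    have := key n N hn le_rfl
    exact absurd hz.2 (by linarith)
  have haux : ∀ a b : ℕ, a < b → b < N →
      Disjoint (Ioo (y a - ε) (y a + ε)) (Ioo (y b - ε) (y b + ε)) := by
    intro a b h hb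
    have := key a b h hb.le
    refine Set.disjoint_left.mpr ?_
    rintro z ⟨h1, h2⟩ ⟨h3, h4⟩
    linarith
  rw [measure_union hdisj hmeas, measure_biUnion_finset ?_ (fun n _ => measurableSet_Ioo)]
  · simp only [Real.volume_Ioo]
    have h1 : ∀ n, y n + ε - (y n - ε) = 2 * ε := fun n => by ring
    simp only [h1, Finset.sum_const, Finset.card_range, nsmul_eq_mul]
    rw [← ENNReal.ofReal_natCast N, ← ENNReal.ofReal_mul (by positivity),
      ← ENNReal.ofReal_add (by linarith [hpos N]) (by positivity)]
    congr 1
    ring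
  · intro a ha b hb hab
    simp only [Finset.coe_range, mem_Iio] at ha hb
    rcases lt_or_gt_of_ne hab with h | h
    · exact haux a b h hb
    · exact (haux b a h ha).symm

lemma L_ratio (hpos : ∀ n, 0 < y n)
    (hgaps : StrictAnti fun n => y n - y (n + 1))
    {ε ε' : ℝ} (hε : 0 < ε) (hee : ε ≤ ε') {N N' : ℕ}
    (hN : y N - y (N + 1) < 2 * ε)
    (hN' : y N' - y (N' + 1) < 2 * ε') (hN'min : ∀ n < N', 2 * ε' ≤ y n - y (n + 1)) :
    y N' + 2 * ε' * (N' + 1) ≤ (ε' / ε) * (y N + 2 * ε * (N + 1)) := by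
  have hNN : N' ≤ N := by
    by_contra h
    push_neg at h
    exact absurd hN (not_lt.mpr (le_trans (by linarith) (hN'min N h)))
  have hy : ∀ M, N' ≤ M → y N' ≤ y M + 2 * ε' * ((M : ℝ) - N') := by
    intro M hM
    induction M, hM using Nat.le_induction with
    | base => simp
    | succ M hM ih =>
      have hg : y M - y (M + 1) ≤ y N' - y (N' + 1) := hgaps.antitone hM
      push_cast
      linarith
  have hy2 := hy N hNN
  have h3 : 1 ≤ ε' / ε := (one_le_div hε).mpr hee
  have h2 : y N ≤ (ε' / ε) * y N := by nlinarith [hpos N]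
  have h1 : (ε' / ε) * (y N + 2 * ε * (N + 1)) = (ε' / ε) * y N + 2 * ε' * (N + 1) := by
    field_simp
  rw [h1]
  have hNN' : (N' : ℝ) ≤ N := Nat.cast_le.mpr hNN
  nlinarith

lemma upper_bound (hpos : ∀ n, 0 < y n)
    {δ LW : ℝ} (hδ : 0 < δ) (hδ2 : δ ≤ 1/2) (hLW : 0 ≤ LW)
    (hvolW : volume (Metric.thickening (3*δ) (Set.range y)) = ENNReal.ofReal LW) :
    volume (Metric.thickening δ
        (⋃ n : ℕ, {p : ℝ × ℝ | p.2 ∈ Icc (y n) 1 ∧ p.1 = y n / p.2}))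
      ≤ ENNReal.ofReal (6*δ + Real.log (1/δ) * LW) := by
  set W := Metric.thickening (3*δ) (Set.range y) with hW
  set A : Set (ℝ × ℝ) := Ioo (-δ) (1+δ) ×ˢ Ioc (-δ) (2*δ) with hA
  set B : Set (ℝ × ℝ) := {p : ℝ × ℝ | p.2 ∈ Ioo (2*δ) (1+δ) ∧ p.2*p.1 ∈ W} with hB
  have hWopen : IsOpen W := Metric.isOpen_thickening
  have hsub : Metric.thickening δ
      (⋃ n : ℕ, {p : ℝ × ℝ | p.2 ∈ Icc (y n) 1 ∧ p.1 = y n / p.2}) ⊆ A ∪ B := by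
    intro p hp
    rw [Metric.mem_thickening_iff] at hp
    obtain ⟨q, hq, hd⟩ := hp
    simp only [mem_iUnion, mem_setOf_eq] at hq
    obtain ⟨n, ⟨hs1, hs2⟩, hx⟩ := hq
    rw [Prod.dist_eq, max_lt_iff, Real.dist_eq, Real.dist_eq, abs_lt, abs_lt] at hd
    obtain ⟨⟨hd1, hd2⟩, hd3, hd4⟩ := hd
    have hyn := hpos n
    have hq2 : 0 < q.2 := lt_of_lt_of_le hyn hs1
    have hq1a : y n ≤ q.1 := by
      rw [hx, le_div_iff₀ hq2]; nlinarith
    have hq1b : q.1 ≤ 1 := by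
      rw [hx, div_le_one hq2]; exact hs1
    rcases le_or_gt p.2 (2*δ) with h | h
    · left
      refine ⟨⟨by linarith, by linarith⟩, by linarith, h⟩
    · right
      refine ⟨⟨h, by linarith⟩, ?_⟩
      rw [Metric.mem_thickening_iff]
      refine ⟨y n, mem_range_self n, ?_⟩
      rw [Real.dist_eq]
      have hiden : p.2*p.1 - y n = p.2*(p.1 - q.1) + (p.2 - q.2)*q.1 := by
        rw [hx]; field_simp; ring
      have habs : |p.2*p.1 - y n| ≤ |p.2| * |p.1 - q.1| + |p.2 - q.2| * |q.1| := by
        rw [hiden]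
        refine le_trans (abs_add_le _ _) ?_
        rw [abs_mul, abs_mul]
      have h1 : |p.2| ≤ 1 + δ := by rw [abs_le]; constructor <;> linarith
      have h2 : |p.1 - q.1| < δ := by rw [abs_lt]; exact ⟨hd1, hd2⟩
      have h3 : |p.2 - q.2| < δ := by rw [abs_lt]; exact ⟨hd3, hd4⟩
      have h4 : |q.1| ≤ 1 := by rw [abs_le]; constructor <;> linarith
      nlinarith [abs_nonneg (p.2*p.1 - y n), abs_nonneg (p.1 - q.1), abs_nonneg (p.2 - q.2),
        abs_nonneg p.2, abs_nonneg q.1]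
  have hmeasB : MeasurableSet B := by
    have : B = (fun p : ℝ × ℝ => p.2) ⁻¹' Ioo (2*δ) (1+δ)
        ∩ (fun p : ℝ × ℝ => p.2*p.1) ⁻¹' W := rfl
    rw [this]
    exact (measurable_snd measurableSet_Ioo).inter
      ((measurable_snd.mul measurable_fst) hWopen.measurableSet)
  refine le_trans (measure_mono hsub) (le_trans (measure_union_le A B) ?_)
  have hvolA : volume A ≤ ENNReal.ofReal (6*δ) := by
    rw [hA, Measure.volume_eq_prod ℝ ℝ, Measure.prod_prod, Real.volume_Ioo, Real.volume_Ioc]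
    calc ENNReal.ofReal (1+δ-(-δ)) * ENNReal.ofReal (2*δ-(-δ))
        ≤ ENNReal.ofReal 2 * ENNReal.ofReal (3*δ) := by
          gcongr <;> linarith
      _ = ENNReal.ofReal (6*δ) := by
          rw [← ENNReal.ofReal_mul (by norm_num)]
          congr 1
          ring
  have hvolB : volume B ≤ ENNReal.ofReal (Real.log (1/δ) * LW) := by
    rw [hB, Measure.volume_eq_prod ℝ ℝ, Measure.prod_apply_symm hmeasB]
    have hsl : (fun t => volume ((fun x => (x, t)) ⁻¹' B))
        = fun t => Set.indicator (Ioo (2*δ) (1+δ))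
            (fun t => volume ((fun x => t*x) ⁻¹' W)) t := by
      funext t
      by_cases ht : t ∈ Ioo (2*δ) (1+δ)
      · rw [Set.indicator_of_mem ht]
        have : ((fun x => (x, t)) ⁻¹' B) = ((fun x => t*x) ⁻¹' W) := by
          ext x
          simp only [hB, mem_preimage, mem_setOf_eq]
          exact and_iff_right ht
        rw [this]
      · rw [Set.indicator_of_notMem ht]
        have : ((fun x => (x, t)) ⁻¹' B) = ∅ := by
          ext x
          simp only [hB, mem_preimage, mem_setOf_eq, mem_empty_iff_false, iff_false]
          exact fun h => ht h.1
        rw [this, measure_empty]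
    rw [hsl, lintegral_indicator measurableSet_Ioo]
    have hcong : ∫⁻ t in Ioo (2*δ) (1+δ), volume ((fun x => t*x) ⁻¹' W)
        = ∫⁻ t in Ioo (2*δ) (1+δ), ENNReal.ofReal (1/t) * ENNReal.ofReal LW := by
      apply setLIntegral_congr_fun measurableSet_Ioo
      intro t ht
      beta_reduce
      have ht0 : (0:ℝ) < t := lt_trans (by linarith) ht.1
      rw [show ((fun x => t*x) ⁻¹' W) = ((t * ·) ⁻¹' W) from rfl,
        Real.volume_preimage_mul_left (ne_of_gt ht0), hvolW, abs_inv, abs_of_pos ht0,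
        one_div]
    have hmeas1 : Measurable fun t : ℝ => ENNReal.ofReal (1/t) := by
      simp only [one_div]
      exact measurable_inv.ennreal_ofReal
    rw [hcong, lintegral_mul_const _ hmeas1]
    have hint : IntegrableOn (fun t : ℝ => 1/t) (Ioo (2*δ) (1+δ)) := by
      have hc : ContinuousOn (fun t : ℝ => 1/t) (Icc (2*δ) (1+δ)) := by
        apply ContinuousOn.div continuousOn_const continuousOn_id
        intro x hx
        have := hx.1
        simp only [id] at *
        exact fun h0 => absurd h0 (ne_of_gt (by linarith))
      exact (hc.integrableOn_Icc).mono_set Ioo_subset_Icc_self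
    have hnn : 0 ≤ᵐ[volume.restrict (Ioo (2*δ) (1+δ))] fun t : ℝ => 1/t := by
      filter_upwards [ae_restrict_mem measurableSet_Ioo] with t ht
      have ht0 : (0:ℝ) < t := lt_trans (by linarith) ht.1
      positivity
    rw [← ofReal_integral_eq_lintegral_ofReal hint hnn]
    have hval : ∫ t in Ioo (2*δ) (1+δ), 1/t = Real.log ((1+δ)/(2*δ)) := by
      rw [← integral_Ioc_eq_integral_Ioo, ← intervalIntegral.integral_of_le (by linarith : 2*δ ≤ 1+δ)]
      apply integral_one_div
      rw [Set.uIcc_of_le (by linarith : 2*δ ≤ 1+δ)]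
      rintro ⟨h1, -⟩
      linarith
    rw [hval, ← ENNReal.ofReal_mul (Real.log_nonneg (by rw [le_div_iff₀ (by linarith)]; linarith))]
    apply ENNReal.ofReal_le_ofReal
    apply mul_le_mul_of_nonneg_right _ hLW
    have hq : (1+δ)/(2*δ) ≤ 1/δ := by
      rw [div_le_div_iff₀ (by linarith) hδ]
      nlinarith
    exact Real.log_le_log (by positivity) hq
  calc volume A + volume B ≤ ENNReal.ofReal (6*δ) + ENNReal.ofReal (Real.log (1/δ) * LW) :=
        add_le_add hvolA hvolB
    _ = ENNReal.ofReal (6*δ + Real.log (1/δ) * LW) := by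
        have h1δ : (1:ℝ) ≤ 1/δ := by rw [le_div_iff₀ hδ]; linarith
        rw [← ENNReal.ofReal_add (by positivity) (mul_nonneg (Real.log_nonneg h1δ) hLW)]

lemma lower_bound (hpos : ∀ n, 0 < y n) (hanti : StrictAnti y)
    {δ L2 : ℝ} {K : ℕ} (hδ : 0 < δ) (hδ2 : δ < 1/2)
    (hK : y K ≤ 1/2)
    (hvolY2 : volume (Metric.thickening (δ/2) (Set.range y)) = ENNReal.ofReal L2) :
    ENNReal.ofReal ((1/2) * (L2 - K*δ)) ≤ volume (Metric.thickening δ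
        (⋃ n : ℕ, {p : ℝ × ℝ | p.2 ∈ Icc (y n) 1 ∧ p.1 = y n / p.2})) := by
  set T := Metric.thickening (δ/2) (Set.range y ∩ Iic (1/2)) with hT
  have hTopen : IsOpen T := Metric.isOpen_thickening
  set B : Set (ℝ × ℝ) := {p : ℝ × ℝ | p.2 ∈ Ioc (1/2) 1 ∧ p.2*p.1 ∈ T} with hB
  have hmeasB : MeasurableSet B := by
    have : B = (fun p : ℝ × ℝ => p.2) ⁻¹' Ioc (1/2) 1
        ∩ (fun p : ℝ × ℝ => p.2*p.1) ⁻¹' T := rfl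
    rw [this]
    exact (measurable_snd measurableSet_Ioc).inter
      ((measurable_snd.mul measurable_fst) hTopen.measurableSet)
  -- B is inside the thickening of the union of trajectories
  have hBsub : B ⊆ Metric.thickening δ
      (⋃ n : ℕ, {p : ℝ × ℝ | p.2 ∈ Icc (y n) 1 ∧ p.1 = y n / p.2}) := by
    rintro p ⟨ht, hu⟩
    rw [hT, Metric.mem_thickening_iff] at hu
    obtain ⟨w, ⟨⟨n, rfl⟩, hw2⟩, hdw⟩ := hu
    rw [Real.dist_eq] at hdw
    rw [Metric.mem_thickening_iff]
    have hp2 : (1:ℝ)/2 < p.2 := ht.1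
    have hp2' : (0:ℝ) < p.2 := by linarith
    refine ⟨(y n / p.2, p.2), ?_, ?_⟩
    · simp only [mem_iUnion, mem_setOf_eq]
      exact ⟨n, ⟨by simp only [mem_Iic] at hw2; linarith, ht.2⟩, rfl⟩
    · rw [Prod.dist_eq]
      apply max_lt
      · rw [Real.dist_eq]
        have : p.1 - y n / p.2 = (p.2 * p.1 - y n) / p.2 := by field_simp
        rw [this, abs_div, abs_of_pos hp2', div_lt_iff₀ hp2']
        have h5 : δ/2 < δ * p.2 := by nlinarith
        linarith
      · simp [hδ]
  -- volume of T is almost L2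
  have hvolT : ENNReal.ofReal (L2 - K*δ) ≤ volume T := by
    have hcover : Set.range y ⊆ (Set.range y ∩ Iic (1/2)) ∪ ⋃ n ∈ Finset.range K, {y n} := by
      rintro w ⟨n, rfl⟩
      rcases le_or_gt (y n) (1/2) with h | h
      · exact Or.inl ⟨mem_range_self n, h⟩
      · refine Or.inr (mem_biUnion (Finset.mem_range.mpr ?_) rfl)
        by_contra hn
        push_neg at hn
        exact absurd (le_trans (hanti.antitone hn) hK) (not_le.mpr h)
    have h1 : Metric.thickening (δ/2) (Set.range y) ⊆
        T ∪ ⋃ n ∈ Finset.range K, Metric.ball (y n) (δ/2) := by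
      intro z hz
      have h0 := Metric.thickening_subset_of_subset (δ/2) hcover hz
      rw [Metric.thickening_union] at h0
      rcases h0 with h | h
      · exact Or.inl h
      · right
        rw [Metric.mem_thickening_iff] at h
        obtain ⟨w, hw, hdzw⟩ := h
        simp only [Finset.mem_range, mem_iUnion, mem_singleton_iff] at hw
        obtain ⟨n, hn, rfl⟩ := hw
        exact mem_biUnion (Finset.mem_range.mpr hn) (Metric.mem_ball.mpr hdzw)
    have h2 : ENNReal.ofReal L2 ≤ volume T + ENNReal.ofReal (K * δ) := by
      rw [← hvolY2]
      refine le_trans (measure_mono h1) (le_trans (measure_union_le _ _) ?_)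
      gcongr
      refine le_trans (measure_biUnion_finset_le _ _) ?_
      have hb : ∀ n ∈ Finset.range K, volume (Metric.ball (y n) (δ/2)) = ENNReal.ofReal δ := by
        intro n _
        rw [Real.volume_ball]
        congr 1
        ring
      rw [Finset.sum_congr rfl hb, Finset.sum_const, Finset.card_range, nsmul_eq_mul,
        ← ENNReal.ofReal_natCast K, ← ENNReal.ofReal_mul (Nat.cast_nonneg K)]
    calc ENNReal.ofReal (L2 - K*δ) = ENNReal.ofReal L2 - ENNReal.ofReal (K*δ) :=
          ENNReal.ofReal_sub _ (by positivity)
      _ ≤ volume T := tsub_le_iff_right.mpr h2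
  -- slicing
  have hvolB : volume T * ENNReal.ofReal (1/2) ≤ volume B := by
    rw [hB, Measure.volume_eq_prod ℝ ℝ, Measure.prod_apply_symm hmeasB]
    have hsl : (fun t => volume ((fun x => (x, t)) ⁻¹' B))
        = fun t => Set.indicator (Ioc (1/2) 1)
            (fun t => volume ((fun x => t*x) ⁻¹' T)) t := by
      funext t
      by_cases ht : t ∈ Ioc (1/2) 1
      · rw [Set.indicator_of_mem ht]
        have : ((fun x => (x, t)) ⁻¹' B) = ((fun x => t*x) ⁻¹' T) := by
          ext x
          simp only [hB, mem_preimage, mem_setOf_eq]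
          exact and_iff_right ht
        rw [this]
      · rw [Set.indicator_of_notMem ht]
        have : ((fun x => (x, t)) ⁻¹' B) = ∅ := by
          ext x
          simp only [hB, mem_preimage, mem_setOf_eq, mem_empty_iff_false, iff_false]
          exact fun h => ht h.1
        rw [this, measure_empty]
    rw [hsl, lintegral_indicator measurableSet_Ioc]
    calc volume T * ENNReal.ofReal (1/2)
        = volume T * volume (Ioc (1/2:ℝ) 1) := by rw [Real.volume_Ioc]; norm_num
      _ = ∫⁻ _ in Ioc (1/2:ℝ) 1, volume T := (setLIntegral_const _ _).symm
      _ ≤ ∫⁻ t in Ioc (1/2:ℝ) 1, volume ((fun x => t*x) ⁻¹' T) := by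
          apply setLIntegral_mono' measurableSet_Ioc
          intro t ht
          rw [show ((fun x => t*x) ⁻¹' T) = ((t * ·) ⁻¹' T) from rfl,
            Real.volume_preimage_mul_left (ne_of_gt (by linarith [ht.1] : (0:ℝ) < t))]
          apply le_mul_of_one_le_left zero_le
          apply ENNReal.one_le_ofReal.mpr
          rw [abs_inv, abs_of_pos (by linarith [ht.1] : (0:ℝ) < t)]
          exact (one_le_inv₀ (by linarith [ht.1])).mpr ht.2
  calc ENNReal.ofReal ((1/2) * (L2 - K*δ))
      = ENNReal.ofReal (L2 - K*δ) * ENNReal.ofReal (1/2) :=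
        (ENNReal.ofReal_mul (by norm_num : (0:ℝ) ≤ 1/2)).trans (mul_comm _ _)
    _ ≤ volume T * ENNReal.ofReal (1/2) := by gcongr
    _ ≤ volume B := hvolB
    _ ≤ _ := measure_mono hBsub

end ResSaddleAux


/-- Minkowski dimension of the union of trajectories `Γ_n` (graphs of `x(y) = y_n/y`
over `[y_n, 1]`) of the resonant linear saddle `ẋ = -x`, `ẏ = y`:
it equals `1 + dim_B {y_n}`. -/
theorem dim_union_trajectories_resonant_saddle (y : ℕ → ℝ) (d : ℝ)
    (hpos : ∀ n, 0 < y n) (hlt1 : ∀ n, y n < 1)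
    (hanti : StrictAnti y) (hlim : Tendsto y atTop (nhds 0))
    (hgaps : StrictAnti fun n => y n - y (n + 1))
    (hd0 : 0 ≤ d) (hd1 : d < 1)
    (hdim : Tendsto
      (fun δ : ℝ => 1 - Real.log ((volume (Metric.thickening δ (Set.range y))).toReal) / Real.log δ)
      (nhdsWithin 0 (Ioi 0)) (nhds d)) :
    Tendsto
      (fun δ : ℝ => 2 - Real.log ((volume (Metric.thickening δ
          (⋃ n : ℕ, {p : ℝ × ℝ | p.2 ∈ Icc (y n) 1 ∧ p.1 = y n / p.2}))).toReal)
        / Real.log δ)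
      (nhdsWithin 0 (Ioi 0)) (nhds (1 + d)) := by
  classical
  set G := ⋃ n : ℕ, {p : ℝ × ℝ | p.2 ∈ Icc (y n) 1 ∧ p.1 = y n / p.2} with hGdef
  have hgpos : ∀ n, (0:ℝ) < y n - y (n + 1) := fun n => sub_pos.mpr (hanti (lt_add_one n))
  set NN : ℝ → ℕ := fun ε => if h : ∃ n, y n - y (n + 1) < 2 * ε then Nat.find h else 0 with hNN
  set L : ℝ → ℝ := fun ε => y (NN ε) + 2 * ε * (NN ε + 1) with hLdef
  clear_value L
  have hNspec : ∀ {ε : ℝ}, 0 < ε →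
      (y (NN ε) - y (NN ε + 1) < 2 * ε ∧ ∀ n < NN ε, 2 * ε ≤ y n - y (n + 1)) := by
    intro ε hε
    have h := ResSaddleAux.exists_gap_lt hlim hε
    simp only [hNN, dif_pos h]
    exact ⟨Nat.find_spec h, fun n hn => not_lt.mp (Nat.find_min h hn)⟩
  have hvolY : ∀ {ε : ℝ}, 0 < ε →
      volume (Metric.thickening ε (Set.range y)) = ENNReal.ofReal (L ε) := by
    intro ε hε
    obtain ⟨h1, h2⟩ := hNspec hε
    simp only [hLdef]
    rw [ResSaddleAux.thick_eq hpos hanti hlim hgaps hε h1 h2]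
    exact ResSaddleAux.vol_formula hpos hε (ResSaddleAux.chain_le hanti h2)
  have hL2 : ∀ {ε : ℝ}, 0 < ε → 2 * ε ≤ L ε := by
    intro ε hε
    have h0 := hpos (NN ε)
    have h1 : (0:ℝ) ≤ (NN ε : ℝ) := Nat.cast_nonneg _
    simp only [hLdef]
    nlinarith
  have hLpos : ∀ {ε : ℝ}, 0 < ε → 0 < L ε := fun {ε} hε => lt_of_lt_of_le (by linarith) (hL2 hε)
  have hLratio : ∀ {ε ε' : ℝ}, 0 < ε → ε ≤ ε' → L ε' ≤ (ε' / ε) * L ε := by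
    intro ε ε' hε hee
    obtain ⟨h1, h2⟩ := hNspec hε
    obtain ⟨h1', h2'⟩ := hNspec (lt_of_lt_of_le hε hee)
    simp only [hLdef]
    exact ResSaddleAux.L_ratio hpos hgaps hε hee h1 h1' h2'
  have hNlow : ∀ (M : ℕ) {ε : ℝ}, 0 < ε → 2 * ε ≤ y M - y (M + 1) → M ≤ NN ε := by
    intro M ε hε hgap
    by_contra h
    push_neg at h
    have h3 := (hNspec hε).1
    have h4 : y M - y (M + 1) ≤ y (NN ε) - y (NN ε + 1) :=
      hgaps.antitone (le_of_lt h)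
    linarith
  have hKex : ∃ n, y n ≤ 1/2 := by
    obtain ⟨n, hn⟩ := (hlim.eventually_lt_const (by norm_num : (0:ℝ) < 1/2)).exists
    exact ⟨n, hn.le⟩
  set K := Nat.find hKex with hKdef
  have hK : y K ≤ 1/2 := Nat.find_spec hKex
  -- upper bound event
  have hup : ∀ᶠ δ in nhdsWithin (0:ℝ) (Ioi 0),
      (volume (Metric.thickening δ G)).toReal ≤ 6*δ + Real.log (1/δ) * (3 * L δ)
      ∧ volume (Metric.thickening δ G) ≠ ⊤ := by
    filter_upwards [Ioo_mem_nhdsGT (by norm_num : (0:ℝ) < 1/2)] with δ hδ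
    obtain ⟨hδ0, hδ12⟩ := hδ
    have h3δ : (0:ℝ) < 3*δ := by linarith
    have hb := ResSaddleAux.upper_bound hpos hδ0 hδ12.le (hLpos h3δ).le (hvolY h3δ)
    rw [← hGdef] at hb
    have hlog0 : 0 ≤ Real.log (1/δ) :=
      Real.log_nonneg (by rw [le_div_iff₀ hδ0]; linarith)
    have hL3 : L (3*δ) ≤ 3 * L δ := by
      have := hLratio hδ0 (by linarith : δ ≤ 3*δ)
      have h33 : 3*δ/δ = 3 := by field_simp
      rw [h33] at this
      exact this
    have hmono : 6*δ + Real.log (1/δ) * L (3*δ) ≤ 6*δ + Real.log (1/δ) * (3 * L δ) := by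
      have := mul_le_mul_of_nonneg_left hL3 hlog0
      linarith
    constructor
    · refine ENNReal.toReal_le_of_le_ofReal ?_ (le_trans hb (ENNReal.ofReal_le_ofReal hmono))
      have h8 := hLpos hδ0
      have hprod : 0 ≤ Real.log (1/δ) * (3 * L δ) := mul_nonneg hlog0 (by linarith)
      linarith
    · exact ne_top_of_le_ne_top ENNReal.ofReal_ne_top hb
  -- lower bound event
  have hlo : ∀ᶠ δ in nhdsWithin (0:ℝ) (Ioi 0),
      (1/16) * L δ ≤ (volume (Metric.thickening δ G)).toReal := by
    have hg4K : (0:ℝ) < y (4*K) - y (4*K+1) := hgpos _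
    filter_upwards [Ioo_mem_nhdsGT (by norm_num : (0:ℝ) < 1/2),
      Ioo_mem_nhdsGT hg4K, hup] with δ hδ hδ4 hupδ
    obtain ⟨hδ0, hδ12⟩ := hδ
    have hδh : (0:ℝ) < δ/2 := by linarith
    have h44 : 4*K ≤ NN (δ/2) := hNlow (4*K) hδh (by linarith [hδ4.2])
    have h44' : (4*(K:ℝ)) ≤ (NN (δ/2) : ℝ) := by
      have h45 : ((4*K : ℕ) : ℝ) ≤ ((NN (δ/2)) : ℝ) := Nat.cast_le.mpr h44
      push_cast at h45
      linarith
    have hKδ : (K:ℝ)*δ ≤ (1/4) * L (δ/2) := by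
      have hy0 := hpos (NN (δ/2))
      simp only [hLdef]
      nlinarith
    have hLhalf : L δ ≤ 2 * L (δ/2) := by
      have := hLratio hδh (by linarith : δ/2 ≤ δ)
      have h22 : δ/(δ/2) = 2 := by field_simp
      rw [h22] at this
      exact this
    have hb := ResSaddleAux.lower_bound hpos hanti hδ0 hδ12 hK (hvolY hδh)
    rw [← hGdef] at hb
    have h2 : (1/16) * L δ ≤ (1/2) * (L (δ/2) - K*δ) := by linarith [hLpos hδh]
    have h3 : ENNReal.ofReal ((1/16) * L δ) ≤ volume (Metric.thickening δ G) :=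
      le_trans (ENNReal.ofReal_le_ofReal h2) hb
    have := ENNReal.toReal_mono hupδ.2 h3
    rwa [ENNReal.toReal_ofReal (by nlinarith [hLpos hδ0] : (0:ℝ) ≤ (1/16) * L δ)] at this
  -- rewrite hdim in terms of L
  have hdim2 : Tendsto (fun δ : ℝ => 1 - Real.log (L δ) / Real.log δ)
      (nhdsWithin 0 (Ioi 0)) (nhds d) := by
    apply hdim.congr'
    filter_upwards [self_mem_nhdsWithin] with δ hδ
    rw [hvolY hδ, ENNReal.toReal_ofReal (hLpos hδ).le]
  -- the error term tends to zero
  have hm : Tendsto (fun δ : ℝ => -Real.log δ) (nhdsWithin 0 (Ioi 0)) atTop :=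
    tendsto_neg_atBot_atTop.comp Real.tendsto_log_nhdsGT_zero
  have hg : Tendsto (fun u : ℝ => (Real.log 16 + Real.log 6 + Real.log u) / u) atTop (nhds 0) := by
    have h1 : Tendsto (fun u : ℝ => (Real.log 16 + Real.log 6) / u + Real.log u / u)
        atTop (nhds (0 + 0)) :=
      (tendsto_const_nhds.div_atTop tendsto_id).add
        Real.isLittleO_log_id_atTop.tendsto_div_nhds_zero
    rw [add_zero] at h1
    apply h1.congr
    intro u
    rw [← add_div]
  have hb : Tendsto (fun δ : ℝ =>
      (Real.log 16 + Real.log 6 + Real.log (-Real.log δ)) / (-Real.log δ))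
      (nhdsWithin 0 (Ioi 0)) (nhds 0) := hg.comp hm
  have herr : Tendsto (fun δ : ℝ =>
      (Real.log (L δ) - Real.log ((volume (Metric.thickening δ G)).toReal)) / Real.log δ)
      (nhdsWithin 0 (Ioi 0)) (nhds 0) := by
    apply squeeze_zero_norm' ?_ hb
    filter_upwards [hup, hlo, Ioo_mem_nhdsGT (by positivity : (0:ℝ) < Real.exp (-2))]
      with δ hupδ hloδ hδe
    obtain ⟨hδ0, hδe2⟩ := hδe
    have hlogδ : Real.log δ < -2 := (Real.log_lt_iff_lt_exp hδ0).mpr hδe2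
    have hlogδ0 : Real.log δ < 0 := by linarith
    set F := (volume (Metric.thickening δ G)).toReal with hF
    have hLp : 0 < L δ := hLpos hδ0
    have hFpos : 0 < F := lt_of_lt_of_le (by nlinarith) hloδ
    have hneglog : (2:ℝ) ≤ -Real.log δ := by linarith
    have hF2 : F ≤ 6 * (-Real.log δ) * L δ := by
      have h1 := hupδ.1
      rw [one_div, Real.log_inv] at h1
      have h2 : 2 * δ ≤ L δ := hL2 hδ0
      nlinarith
    have hlow : Real.log 16⁻¹ + Real.log (L δ) ≤ Real.log F := by
      rw [← Real.log_mul (by norm_num) (ne_of_gt hLp)]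
      apply Real.log_le_log (by nlinarith)
      rw [show (16:ℝ)⁻¹ * L δ = (1/16) * L δ by norm_num]
      exact hloδ
    have hhigh : Real.log F ≤ Real.log 6 + Real.log (-Real.log δ) + Real.log (L δ) := by
      rw [← Real.log_mul (by norm_num) (by linarith : -Real.log δ ≠ 0),
        ← Real.log_mul (by nlinarith : (6:ℝ) * -Real.log δ ≠ 0) (ne_of_gt hLp)]
      exact Real.log_le_log hFpos hF2
    have hlog16 : Real.log 16⁻¹ = -Real.log 16 := Real.log_inv 16
    have h6 : (0:ℝ) ≤ Real.log 6 := Real.log_nonneg (by norm_num)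
    have h16 : (0:ℝ) ≤ Real.log 16 := Real.log_nonneg (by norm_num)
    have hll : (0:ℝ) ≤ Real.log (-Real.log δ) := Real.log_nonneg (by linarith)
    rw [Real.norm_eq_abs, abs_div, abs_of_neg hlogδ0]
    have hnum : |Real.log (L δ) - Real.log F| ≤
        Real.log 16 + Real.log 6 + Real.log (-Real.log δ) := by
      rw [abs_le]
      constructor
      · linarith [hhigh]
      · linarith [hlow]
    exact (div_le_div_iff_of_pos_right (by linarith)).mpr hnum
  -- final assembly
  have hgoal : Tendsto (fun δ : ℝ => 1 + (1 - Real.log (L δ) / Real.log δ) +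
      (Real.log (L δ) - Real.log ((volume (Metric.thickening δ G)).toReal)) / Real.log δ)
      (nhdsWithin 0 (Ioi 0)) (nhds (1 + d + 0)) :=
    (tendsto_const_nhds.add hdim2).add herr
  rw [add_zero] at hgoal
  apply hgoal.congr
  intro δ
  ring
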